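/- Let F be a free group on a finite set S with the standard word-length metric L (each generator has length 1). Define ψ(x) = [x] for x ∈ S and ψ(x) = −x[x⁻¹] for x⁻¹ ∈ S, and define the ℚ-linear map s₀ : ℚ[F] → ℚ[F][S] on basis elements by s₀(g) = Σ_{j=1}^n x₁⋯x_{j−1} ψ(x_j), where g = x₁⋯x_n is the reduced word for g. Then |s₀(g)| ≤ (1 + 2L(g))², where ℚ[F] carries the norm with |g| = 1 + L(g) and ℚ[F][S] carries the norm with |g[s]| = 1 + L(g) + 1. -/

import Mathlib

namespace PBoundedContraction

variable {S : Type*} [DecidableEq S]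

/-- `ψ(x) = [x]` for `x ∈ S` and `ψ(x) = -x[x⁻¹]` for `x⁻¹ ∈ S`, as an element of the
free module `ℚ[F][S]`, modelled as `(F × S) →₀ ℚ` (a letter is a pair `(x, b)` with
`b = true` meaning the generator `x` and `b = false` meaning `x⁻¹`). -/
noncomputable def psi (ℓ : S × Bool) : (FreeGroup S × S) →₀ ℚ :=
  if ℓ.2 then Finsupp.single (1, ℓ.1) 1
  else Finsupp.single ((FreeGroup.of ℓ.1)⁻¹, ℓ.1) (-1)

/-- Left translation of `ℚ[F][S]` by a group element. -/
noncomputable def transl (h : FreeGroup S) (m : (FreeGroup S × S) →₀ ℚ) :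
    (FreeGroup S × S) →₀ ℚ :=
  Finsupp.mapDomain (fun p => (h * p.1, p.2)) m

/-- `s₀` on a reduced word `x₁ ⋯ x_n`: `Σ_j x₁ ⋯ x_{j-1} ψ(x_j)`, defined by recursion. -/
noncomputable def s0aux : List (S × Bool) → (FreeGroup S × S) →₀ ℚ
  | [] => 0
  | ℓ :: rest => psi ℓ + transl (FreeGroup.mk [ℓ]) (s0aux rest)

/-- The contraction `s₀ : ℚ[F] → ℚ[F][S]`, `s₀(g) = Σ_j x₁ ⋯ x_{j-1} ψ(x_j)` where
`x₁ ⋯ x_n` is the reduced word representing `g`. -/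
noncomputable def s0 (g : FreeGroup S) : (FreeGroup S × S) →₀ ℚ :=
  s0aux (FreeGroup.toWord g)

/-- The standard word length on a free group (all generators have weight 1). -/
def stdLen (g : FreeGroup S) : ℕ := (FreeGroup.toWord g).length

/-- The weighted ℓ¹-norm on `ℚ[F][S]` with weights `|g[s]| = 1 + L(g) + 1`. -/
noncomputable def pNormFS (a : (FreeGroup S × S) →₀ ℚ) : ℝ :=
  a.sum fun x c => |(c : ℝ)| * (1 + (stdLen x.1 : ℝ) + 1)

noncomputable def ell1 (a : (FreeGroup S × S) →₀ ℚ) : ℝ :=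
  a.sum fun _ c => |(c : ℝ)|

lemma stdLen_eq (g : FreeGroup S) : stdLen g = FreeGroup.norm g := rfl

lemma stdLen_mul_le (g h : FreeGroup S) : stdLen (g * h) ≤ stdLen g + stdLen h :=
  FreeGroup.norm_mul_le g h

lemma pNormFS_eq_sum (a : (FreeGroup S × S) →₀ ℚ) (t : Finset (FreeGroup S × S))
    (h : a.support ⊆ t) :
    pNormFS a = ∑ x ∈ t, |(a x : ℝ)| * (1 + (stdLen x.1 : ℝ) + 1) := by
  rw [pNormFS, Finsupp.sum_of_support_subset a h _ (by intro i _; simp)]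

lemma ell1_eq_sum (a : (FreeGroup S × S) →₀ ℚ) (t : Finset (FreeGroup S × S))
    (h : a.support ⊆ t) : ell1 a = ∑ x ∈ t, |(a x : ℝ)| := by
  rw [ell1, Finsupp.sum_of_support_subset a h _ (by intro i _; simp)]

lemma pNormFS_add_le (a b : (FreeGroup S × S) →₀ ℚ) :
    pNormFS (a + b) ≤ pNormFS a + pNormFS b := by
  have hs : (a + b).support ⊆ a.support ∪ b.support := Finsupp.support_add
  rw [pNormFS_eq_sum (a + b) (a.support ∪ b.support) hs,
    pNormFS_eq_sum a (a.support ∪ b.support) Finset.subset_union_left,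
    pNormFS_eq_sum b (a.support ∪ b.support) Finset.subset_union_right, ← Finset.sum_add_distrib]
  refine Finset.sum_le_sum fun x _ => ?_
  rw [← add_mul]
  have hw : (0:ℝ) ≤ 1 + (stdLen x.1 : ℝ) + 1 := by positivity
  refine mul_le_mul_of_nonneg_right ?_ hw
  push_cast [Finsupp.add_apply]
  exact abs_add_le _ _

lemma transl_inj (h : FreeGroup S) :
    Function.Injective (fun p : FreeGroup S × S => (h * p.1, p.2)) := by
  intro p q hpq
  simp only [Prod.mk.injEq, mul_right_injective h, Prod.ext_iff] at hpq ⊢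
  exact ⟨mul_left_cancel hpq.1, hpq.2⟩

lemma ell1_transl (h : FreeGroup S) (a : (FreeGroup S × S) →₀ ℚ) :
    ell1 (transl h a) = ell1 a := by
  rw [transl, ell1, Finsupp.sum_mapDomain_index_inj (transl_inj h), ell1]

lemma pNormFS_transl_le (h : FreeGroup S) (a : (FreeGroup S × S) →₀ ℚ) :
    pNormFS (transl h a) ≤ pNormFS a + (stdLen h : ℝ) * ell1 a := by
  rw [transl, pNormFS, Finsupp.sum_mapDomain_index_inj (transl_inj h), pNormFS, ell1,
    Finsupp.sum, Finsupp.sum, Finsupp.sum, Finset.mul_sum, ← Finset.sum_add_distrib]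
  refine Finset.sum_le_sum fun x _ => ?_
  have : (stdLen (h * x.1) : ℝ) ≤ stdLen h + stdLen x.1 := by
    exact_mod_cast stdLen_mul_le h x.1
  have habs : (0:ℝ) ≤ |(a x : ℝ)| := abs_nonneg _
  nlinarith [this, habs]

lemma ell1_psi (ℓ : S × Bool) : ell1 (psi ℓ) ≤ 1 := by
  rw [psi]
  split <;> rw [ell1, Finsupp.sum_single_index (by simp)] <;> norm_num

lemma pNormFS_psi (ℓ : S × Bool) : pNormFS (psi ℓ) ≤ 3 := by
  rw [psi]
  split
  · rw [pNormFS, Finsupp.sum_single_index (by simp)]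
    have : stdLen ((1 : FreeGroup S)) = 0 := rfl
    simp [this]
    norm_num
  · have h1 : stdLen ((FreeGroup.of ℓ.1)⁻¹) = 1 := by
      rw [stdLen_eq, FreeGroup.norm_inv_eq, FreeGroup.norm_of]
    rw [pNormFS, Finsupp.sum_single_index (by simp)]
    simp [h1]
    norm_num

lemma stdLen_mk_single (ℓ : S × Bool) : stdLen (FreeGroup.mk [ℓ]) ≤ 1 :=
  FreeGroup.norm_mk_le

lemma ell1_s0aux (L : List (S × Bool)) : ell1 (s0aux L) ≤ L.length := by
  induction L with
  | nil => simp [s0aux, ell1]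
  | cons ℓ rest ih =>
    have hadd : ell1 (psi ℓ + transl (FreeGroup.mk [ℓ]) (s0aux rest)) ≤
        ell1 (psi ℓ) + ell1 (transl (FreeGroup.mk [ℓ]) (s0aux rest)) := by
      have hs : (psi ℓ + transl (FreeGroup.mk [ℓ]) (s0aux rest)).support ⊆
          (psi ℓ).support ∪ (transl (FreeGroup.mk [ℓ]) (s0aux rest)).support :=
        Finsupp.support_add
      rw [ell1_eq_sum _ _ hs, ell1_eq_sum (psi ℓ) _ Finset.subset_union_left,
        ell1_eq_sum (transl (FreeGroup.mk [ℓ]) (s0aux rest)) _ Finset.subset_union_right,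
        ← Finset.sum_add_distrib]
      refine Finset.sum_le_sum fun x _ => ?_
      push_cast [Finsupp.add_apply]
      exact abs_add_le _ _
    calc ell1 (s0aux (ℓ :: rest)) ≤ ell1 (psi ℓ) + ell1 (transl (FreeGroup.mk [ℓ]) (s0aux rest)) :=
          hadd
      _ ≤ 1 + rest.length := by
          rw [ell1_transl]
          exact add_le_add (ell1_psi ℓ) ih
      _ ≤ (ℓ :: rest).length := by push_cast [List.length_cons]; linarith
lemma ell1_nonneg (a : (FreeGroup S × S) →₀ ℚ) : 0 ≤ ell1 a := by
  rw [ell1, Finsupp.sum]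
  exact Finset.sum_nonneg fun _ _ => abs_nonneg _

lemma pNormFS_s0aux (L : List (S × Bool)) :
    pNormFS (s0aux L) ≤ (L.length : ℝ) * (L.length + 2) := by
  induction L with
  | nil => simp [s0aux, pNormFS]
  | cons ℓ rest ih =>
    have h1 := pNormFS_add_le (psi ℓ) (transl (FreeGroup.mk [ℓ]) (s0aux rest))
    have h2 := pNormFS_transl_le (FreeGroup.mk [ℓ]) (s0aux rest)
    have h3 := pNormFS_psi ℓ
    have h4 := ell1_s0aux (S := S) rest
    have h5 : (stdLen (FreeGroup.mk [ℓ]) : ℝ) ≤ 1 := by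
      exact_mod_cast stdLen_mk_single ℓ
    have h6 := ell1_nonneg (s0aux (S := S) rest)
    have hlen : ((ℓ :: rest).length : ℝ) = rest.length + 1 := by push_cast [List.length_cons]; ring
    rw [s0aux, hlen]
    nlinarith [h1, h2, h3, h4, h5, h6, ih]

/-- the contraction `s₀` satisfies `|s₀(g)| ≤ (1 + 2 L(g))²`. -/
theorem pNormFS_s0_le [Fintype S] (g : FreeGroup S) :
    pNormFS (s0 g) ≤ (1 + 2 * (stdLen g : ℝ)) ^ 2 := by
  have h := pNormFS_s0aux (FreeGroup.toWord g)
  have hlen : ((FreeGroup.toWord g).length : ℝ) = (stdLen g : ℝ) := rfl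
  rw [s0]
  nlinarith [h, hlen, Nat.cast_nonneg (α := ℝ) (stdLen g)]

end PBoundedContraction
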